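/- Let G be the graph on the 21 vertices {x_i, y_i, z_i : i ∈ ℤ/7ℤ} with edges {x_i, x_{i+1}}, {x_i, y_i}, {y_i, z_i}, {z_i, y_{i+1}}, {z_i, z_{i+3}} (indices modulo 7). Define ν : V → ℝ by ν(x_i) = ν(z_i) = 3/7 and ν(y_i) = 5/14 for all i. Then ν ∉ STAB(G), i.e., ν is not in the convex hull of the characteristic vectors of the stable sets of G. -/

import Mathlib

variable {V : Type*}

/-- A stable (independent) set of a graph. -/
def IsStableSet (G : SimpleGraph V) (S : Set V) : Prop :=
  ∀ u ∈ S, ∀ v ∈ S, ¬ G.Adj u v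

/-- The vertex set of a cycle subgraph of `G`, given by an injective
parametrization `c : ZMod m → V` (`m ≥ 3`) with consecutive vertices adjacent. -/
def IsCycleSet (G : SimpleGraph V) (C : Set V) : Prop :=
  ∃ (m : ℕ) (c : ZMod m → V), 3 ≤ m ∧ Function.Injective c ∧
    (∀ i, G.Adj (c i) (c (i + 1))) ∧ C = Set.range c

/-- The vertex set of an odd cycle subgraph of `G`. -/
def IsOddCycleSet (G : SimpleGraph V) (C : Set V) : Prop :=
  ∃ (m : ℕ) (c : ZMod m → V), 3 ≤ m ∧ Odd m ∧ Function.Injective c ∧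
    (∀ i, G.Adj (c i) (c (i + 1))) ∧ C = Set.range c

/-- The vertex set of a chordless odd cycle subgraph of `G`: the only edges of `G`
between vertices of the cycle are the cycle edges. -/
def IsChordlessOddCycleSet (G : SimpleGraph V) (C : Set V) : Prop :=
  ∃ (m : ℕ) (c : ZMod m → V), 3 ≤ m ∧ Odd m ∧ Function.Injective c ∧
    (∀ i, G.Adj (c i) (c (i + 1))) ∧
    (∀ i j, G.Adj (c i) (c j) → j = i + 1 ∨ i = j + 1) ∧
    C = Set.range c

/-- A maximal clique of `G`. -/
def IsMaximalClique (G : SimpleGraph V) (K : Set V) : Prop :=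
  G.IsClique K ∧ ∀ K' : Set V, G.IsClique K' → K ⊆ K' → K = K'

/-- Membership in HSTAB(G). -/
def memHSTAB (G : SimpleGraph V) (f : V → ℝ) : Prop :=
  (∀ x, 0 ≤ f x) ∧
  (∀ K : Set V, G.IsClique K → (∑ᶠ v ∈ K, f v) ≤ 1) ∧
  (∀ C : Set V, IsOddCycleSet G C → (∑ᶠ v ∈ C, f v) ≤ ((C.ncard : ℝ) - 1) / 2)

/-- Membership in TSTAB(G). -/
def memTSTAB (G : SimpleGraph V) (f : V → ℝ) : Prop :=
  (∀ x, 0 ≤ f x ∧ f x ≤ 1) ∧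
  (∀ x y, G.Adj x y → f x + f y ≤ 1) ∧
  (∀ C : Set V, IsOddCycleSet G C → (∑ᶠ v ∈ C, f v) ≤ ((C.ncard : ℝ) - 1) / 2)

/-- Membership in QSTAB(G). -/
def memQSTAB (G : SimpleGraph V) (f : V → ℝ) : Prop :=
  (∀ x, 0 ≤ f x) ∧
  (∀ K : Set V, G.IsClique K → (∑ᶠ v ∈ K, f v) ≤ 1)

/-- The stable set polytope STAB(G). -/
def STAB (G : SimpleGraph V) : Set (V → ℝ) :=
  convexHull ℝ {f : V → ℝ | ∃ S : Set V, IsStableSet G S ∧ f = S.indicator 1}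

/-- The set `U^(n)` of the paper, as a predicate on pairs `(g, d)`. -/
def memU (G : SimpleGraph V) (n : ℤ) (g : V → ℤ) (d : ℤ) : Prop :=
  (∀ v, n ≤ g v) ∧
  (∀ K : Set V, IsMaximalClique G K → (∑ᶠ v ∈ K, g v) ≤ d - n) ∧
  (∀ C : Set V, IsChordlessOddCycleSet G C → 5 ≤ C.ncard →
    2 * (∑ᶠ v ∈ C, g v) ≤ d * ((C.ncard : ℤ) - 1) - 2 * n)
/-- The 21 vertices `x_i, y_i, z_i`, `i ∈ ℤ/7ℤ`. -/
inductive Vtx : Type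
  | x : ZMod 7 → Vtx
  | y : ZMod 7 → Vtx
  | z : ZMod 7 → Vtx
  deriving DecidableEq, Fintype

/-- The oriented edge relation of the example graph. -/
def paperRel : Vtx → Vtx → Prop := fun u v =>
  (∃ i, u = Vtx.x i ∧ v = Vtx.x (i + 1)) ∨
  (∃ i, u = Vtx.x i ∧ v = Vtx.y i) ∨
  (∃ i, u = Vtx.y i ∧ v = Vtx.z i) ∨
  (∃ i, u = Vtx.z i ∧ v = Vtx.y (i + 1)) ∨
  (∃ i, u = Vtx.z i ∧ v = Vtx.z (i + 3))

instance : DecidableRel paperRel := fun u v => by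
  unfold paperRel; infer_instance

/-- The example graph of the paper. -/
def paperGraph : SimpleGraph Vtx where
  Adj u v := paperRel u v ∨ paperRel v u
  symm := ⟨fun _ _ h => Or.symm h⟩
  loopless := ⟨by
    show ∀ a, ¬(paperRel a a ∨ paperRel a a)
    decide⟩

/-- The function `ν` with `ν(x_i) = ν(z_i) = 3/7`, `ν(y_i) = 5/14`. -/
noncomputable def nuPaper : Vtx → ℝ
  | Vtx.x _ => 3 / 7
  | Vtx.y _ => 5 / 14
  | Vtx.z _ => 3 / 7

instance : DecidableRel paperGraph.Adj := fun u v =>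
  inferInstanceAs (Decidable (paperRel u v ∨ paperRel v u))

open Classical in
/-- indicator count -/
noncomputable def cnt (S : Set Vtx) (v : Vtx) : ℕ := if v ∈ S then 1 else 0

lemma abs5 : ∀ s : Finset (Fin 5),
    (∀ u ∈ s, ∀ w ∈ s, ¬(w = u + 1 ∨ u = w + 1)) → s.card ≤ 2 := by decide

set_option maxRecDepth 40000 in
lemma abs7 : ∀ s : Finset (Fin 7),
    (∀ u ∈ s, ∀ w ∈ s, ¬(w = u + 1 ∨ u = w + 1)) → s.card ≤ 3 := by decide

lemma fiveN (S : Set Vtx) (hS : IsStableSet paperGraph S) (v : Fin 5 → Vtx)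
    (hadj : ∀ j, paperGraph.Adj (v j) (v (j + 1))) :
    (∑ j, cnt S (v j)) ≤ 2 := by
  classical
  have hkey : ∀ u ∈ (Finset.univ.filter fun j => v j ∈ S),
      ∀ w ∈ (Finset.univ.filter fun j => v j ∈ S), ¬(w = u + 1 ∨ u = w + 1) := by
    intro u hu w hw h
    simp only [Finset.mem_filter] at hu hw
    rcases h with h | h
    · exact hS _ hu.2 _ hw.2 (h ▸ hadj u)
    · exact hS _ hw.2 _ hu.2 (h ▸ hadj w)
  have hcard := abs5 _ hkey
  have hsum : (∑ j, cnt S (v j)) = (Finset.univ.filter fun j => v j ∈ S).card := by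
    rw [Finset.card_filter]
    refine Finset.sum_congr rfl fun j _ => ?_
    unfold cnt
    congr 1
  omega

lemma sevenN (S : Set Vtx) (hS : IsStableSet paperGraph S) (v : Fin 7 → Vtx)
    (hadj : ∀ j, paperGraph.Adj (v j) (v (j + 1))) :
    (∑ j, cnt S (v j)) ≤ 3 := by
  classical
  have hkey : ∀ u ∈ (Finset.univ.filter fun j => v j ∈ S),
      ∀ w ∈ (Finset.univ.filter fun j => v j ∈ S), ¬(w = u + 1 ∨ u = w + 1) := by
    intro u hu w hw h
    simp only [Finset.mem_filter] at hu hw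
    rcases h with h | h
    · exact hS _ hu.2 _ hw.2 (h ▸ hadj u)
    · exact hS _ hw.2 _ hu.2 (h ▸ hadj w)
  have hcard := abs7 _ hkey
  have hsum : (∑ j, cnt S (v j)) = (Finset.univ.filter fun j => v j ∈ S).card := by
    rw [Finset.card_filter]
    refine Finset.sum_congr rfl fun j _ => ?_
    unfold cnt
    congr 1
  omega

/-- explicit enumeration of the 21 vertices -/
def enumV : Fin 21 → Vtx :=
  ![Vtx.x 0, Vtx.x 1, Vtx.x 2, Vtx.x 3, Vtx.x 4, Vtx.x 5, Vtx.x 6,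
    Vtx.y 0, Vtx.y 1, Vtx.y 2, Vtx.y 3, Vtx.y 4, Vtx.y 5, Vtx.y 6,
    Vtx.z 0, Vtx.z 1, Vtx.z 2, Vtx.z 3, Vtx.z 4, Vtx.z 5, Vtx.z 6]

set_option maxRecDepth 10000 in
lemma enumV_bij : Function.Bijective enumV := by decide

lemma sum_enum {M : Type*} [AddCommMonoid M] (f : Vtx → M) :
    ∑ v : Vtx, f v = ∑ j : Fin 21, f (enumV j) :=
  (Fintype.sum_bijective enumV enumV_bij _ _ (fun _ => rfl)).symm

lemma card_le (S : Set Vtx) (hS : IsStableSet paperGraph S) :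
    (∑ v : Vtx, cnt S v) ≤ 8 := by
  have h0 := fiveN S hS ![Vtx.x 0, Vtx.x 1, Vtx.y 1, Vtx.z 0, Vtx.y 0] (by decide)
  have h1 := fiveN S hS ![Vtx.x 1, Vtx.x 2, Vtx.y 2, Vtx.z 1, Vtx.y 1] (by decide)
  have h2 := fiveN S hS ![Vtx.x 2, Vtx.x 3, Vtx.y 3, Vtx.z 2, Vtx.y 2] (by decide)
  have h3 := fiveN S hS ![Vtx.x 3, Vtx.x 4, Vtx.y 4, Vtx.z 3, Vtx.y 3] (by decide)
  have h4 := fiveN S hS ![Vtx.x 4, Vtx.x 5, Vtx.y 5, Vtx.z 4, Vtx.y 4] (by decide)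
  have h5 := fiveN S hS ![Vtx.x 5, Vtx.x 6, Vtx.y 6, Vtx.z 5, Vtx.y 5] (by decide)
  have h6 := fiveN S hS ![Vtx.x 6, Vtx.x 0, Vtx.y 0, Vtx.z 6, Vtx.y 6] (by decide)
  have hz := sevenN S hS ![Vtx.z 0, Vtx.z 3, Vtx.z 6, Vtx.z 2, Vtx.z 5, Vtx.z 1, Vtx.z 4]
    (by decide)
  have hz' : cnt S (Vtx.z 0) + cnt S (Vtx.z 3) + cnt S (Vtx.z 6) + cnt S (Vtx.z 2) +
      cnt S (Vtx.z 5) + cnt S (Vtx.z 1) + cnt S (Vtx.z 4) ≤ 3 := by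
    rw [Fin.sum_univ_seven] at hz
    exact hz
  rw [sum_enum]
  simp only [Fin.sum_univ_five, Fin.sum_univ_seven, Matrix.cons_val_zero, Matrix.cons_val_one,
    Matrix.head_cons, Matrix.cons_val_two, Matrix.tail_cons, Matrix.cons_val_three,
    Matrix.cons_val_four, Matrix.cons_val_succ] at h0 h1 h2 h3 h4 h5 h6
  simp only [Fin.sum_univ_succ, Finset.univ_unique, Fin.default_eq_zero, Finset.sum_singleton,
    enumV, Matrix.cons_val_zero, Matrix.cons_val_succ, Fin.succ_zero_eq_one,
    Finset.sum_const, Fin.sum_univ_zero, add_zero]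
  by_contra! hc
  have hc9 := Nat.lt_iff_add_one_le.mp hc
  linarith

lemma indicator_sum_le (S : Set Vtx) (hS : IsStableSet paperGraph S) :
    (∑ v : Vtx, S.indicator (1 : Vtx → ℝ) v) ≤ 8 := by
  classical
  have hcast : ∀ v : Vtx, S.indicator (1 : Vtx → ℝ) v = (cnt S v : ℝ) := by
    intro v
    unfold cnt
    rw [Set.indicator_apply]
    split_ifs <;> simp
  calc (∑ v : Vtx, S.indicator (1 : Vtx → ℝ) v) = ((∑ v : Vtx, cnt S v : ℕ) : ℝ) := by
        push_cast; exact Finset.sum_congr rfl fun v _ => hcast v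
    _ ≤ 8 := by exact_mod_cast card_le S hS

/-- `ν ∉ STAB(G)` for the example graph. -/
theorem stmt17 : nuPaper ∉ STAB paperGraph := by
  intro h
  have hlin : IsLinearMap ℝ (fun f : Vtx → ℝ => ∑ v : Vtx, f v) := by
    constructor
    · intro f g; exact Finset.sum_add_distrib
    · intro c f; simp [Finset.mul_sum]
  have hsub : STAB paperGraph ⊆ {f : Vtx → ℝ | (∑ v : Vtx, f v) ≤ 8} := by
    apply convexHull_min
    · rintro f ⟨S, hS, rfl⟩
      exact indicator_sum_le S hS
    · exact convex_halfSpace_le hlin 8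
  have h8 : (∑ v : Vtx, nuPaper v) ≤ 8 := hsub h
  rw [sum_enum nuPaper] at h8
  simp only [Fin.sum_univ_succ, enumV, Matrix.cons_val_zero, Matrix.cons_val_succ,
    Fin.sum_univ_zero, add_zero, nuPaper] at h8
  norm_num at h8
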